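/- Let 𝕏 ⊆ ℝⁿ and 𝕌 ⊆ ℝᵐ be nonempty compact sets, let C_i : ℝᵐ → ℝ and J : ℝⁿ → ℝ be Lipschitz continuous, let B be a real n×m matrix, f_s : ℝⁿ → ℝⁿ any map, let W ⊆ ℝⁿ be a finite nonempty set with p : W → ℝ satisfying p(w) ≥ 0 and Σ_{w∈W} p(w) = 1, and let γ > 0. Define ε(z) := γ · Σ_{w∈W} p(w) · J(z + w) and D := {z ∈ ℝⁿ : z + w ∈ 𝕏 for all w ∈ W}, assumed nonempty. Fix x ∈ ℝⁿ and assume feasibility: there exists u ∈ 𝕌 with f_s(x) + Bu ∈ D. Define the biconjugates C_i^{**}(u) := sup_{v ∈ ℝᵐ} (⟨u, v⟩ − C_i^{*𝕌}(v)) and ε^{**}(z) := sup_{y ∈ ℝⁿ} (⟨y, z⟩ − ε^{*D}(y)), with values in ℝ ∪ {+∞}. Then sup_{y ∈ ℝⁿ} [ ⟨y, f_s(x)⟩ − C_i^{*𝕌}(−Bᵀy) − ε^{*D}(y) ] = inf_{u ∈ co(𝕌)} [ C_i^{**}(u) + ε^{**}(f_s(x) + Bu) ], both sides are finite, and the infimum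 over the convex hull co(𝕌) is attained. -/

import Mathlib

open scoped RealInnerProductSpace
open Set Pointwise
set_option maxHeartbeats 1000000



private lemma sum_pad {α : Type*} {M : Type*} [AddCommMonoid M] (t : Finset α) (N : ℕ)
    (hcard : t.card ≤ N) (g : α → M) :
    ∑ i : Fin N, (if h : (i : ℕ) < t.card then g (t.equivFin.symm ⟨i, h⟩ : α) else 0)
      = ∑ a ∈ t, g a := by
  classical
  rw [Fin.sum_univ_eq_sum_range (fun j => if h : j < t.card then g (t.equivFin.symm ⟨j, h⟩) else 0)]
  rw [← Finset.sum_subset (Finset.range_subset_range.2 hcard) (fun j _ hj => by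
    exact dif_neg (by simpa using hj))]
  rw [← Fin.sum_univ_eq_sum_range]
  have h1 : ∀ i : Fin t.card,
      (if h : (i : ℕ) < t.card then g (t.equivFin.symm ⟨i, h⟩) else 0)
        = g (t.equivFin.symm i) := by
    intro i
    rw [dif_pos i.is_lt]
  rw [Finset.sum_congr rfl fun i _ => h1 i]
  rw [Equiv.sum_comp t.equivFin.symm (fun a : t => g a)]
  exact Finset.sum_coe_sort t g

theorem isCompact_convexHull_fd {k : ℕ} {s : Set (EuclideanSpace ℝ (Fin k))}
    (hs : IsCompact s) : IsCompact (convexHull ℝ s) := by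
  classical
  rcases s.eq_empty_or_nonempty with rfl | ⟨x₀, hx₀⟩
  · simp
  set N := Module.finrank ℝ (EuclideanSpace ℝ (Fin k)) + 1 with hN
  have hTc : IsCompact ((stdSimplex ℝ (Fin N)) ×ˢ (Set.univ.pi fun _ : Fin N => s)) :=
    (isCompact_stdSimplex (𝕜 := ℝ) (ι := Fin N)).prod (isCompact_univ_pi fun _ => hs)
  have hfc : Continuous fun p : (Fin N → ℝ) × (Fin N → EuclideanSpace ℝ (Fin k)) =>
      ∑ i, p.1 i • p.2 i := by
    refine continuous_finset_sum _ fun i _ => ?_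
    exact ((continuous_apply i).comp continuous_fst).smul ((continuous_apply i).comp continuous_snd)
  have himg : (fun p : (Fin N → ℝ) × (Fin N → EuclideanSpace ℝ (Fin k)) =>
      ∑ i, p.1 i • p.2 i) '' ((stdSimplex ℝ (Fin N)) ×ˢ (Set.univ.pi fun _ : Fin N => s))
      = convexHull ℝ s := by
    apply Subset.antisymm
    · rintro - ⟨⟨w, z⟩, ⟨hw, hz⟩, rfl⟩
      exact (convex_convexHull ℝ s).sum_mem (fun i _ => hw.1 i) hw.2
        (fun i _ => subset_convexHull ℝ s (hz i (mem_univ i)))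
    · intro y hy
      rw [convexHull_eq_union] at hy
      simp only [mem_iUnion] at hy
      obtain ⟨t, hts, hai, hyt⟩ := hy
      have hcard : t.card ≤ N := by
        have h1 := hai.card_le_finrank_succ
        rw [Fintype.card_coe] at h1
        exact h1.trans (Nat.add_le_add_right (Submodule.finrank_le _) 1)
      rw [Finset.convexHull_eq] at hyt
      obtain ⟨w, hw0, hw1, hwy⟩ := hyt
      rw [Finset.centerMass_eq_of_sum_1 _ _ hw1] at hwy
      set zf : Fin N → EuclideanSpace ℝ (Fin k) :=
        fun i => if h : (i : ℕ) < t.card then (t.equivFin.symm ⟨i, h⟩ : EuclideanSpace ℝ (Fin k))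
          else x₀ with hzf
      set wf : Fin N → ℝ := fun i => if h : (i : ℕ) < t.card then w (t.equivFin.symm ⟨i, h⟩) else 0
        with hwf
      refine ⟨⟨wf, zf⟩, ⟨⟨fun i => ?_, ?_⟩, fun i _ => ?_⟩, ?_⟩
      · simp only [hwf]
        split
        · exact hw0 _ (Finset.coe_mem _)
        · exact le_rfl
      · rw [hwf, sum_pad t N hcard w]
        exact hw1
      · simp only [hzf]
        split
        · exact hts (Finset.coe_mem _)
        · exact hx₀
      · show ∑ i : Fin N, wf i • zf i = y
        have : ∑ i : Fin N, wf i • zf i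
            = ∑ i : Fin N, (if h : (i : ℕ) < t.card then
                w (t.equivFin.symm ⟨i, h⟩) • (t.equivFin.symm ⟨i, h⟩ : EuclideanSpace ℝ (Fin k))
              else 0) := by
          refine Finset.sum_congr rfl fun i _ => ?_
          simp only [hwf, hzf]
          split
          · rfl
          · rw [zero_smul]
        rw [this, sum_pad t N hcard (fun a => w a • a)]
        simpa using hwy
  rw [← himg]
  exact hTc.image hfc


lemma lscOn_comp_cont {α β : Type*} [TopologicalSpace α] [TopologicalSpace β]
    {f : β → ℝ} {T : Set β} (hf : LowerSemicontinuousOn f T) {g : α → β}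
    (hg : Continuous g) {s : Set α} (hmaps : MapsTo g s T) :
    LowerSemicontinuousOn (f ∘ g) s := by
  intro x hx c hc
  have h1 := hf (g x) (hmaps hx) c hc
  have h2 : Filter.Tendsto g (nhdsWithin x s) (nhdsWithin (g x) T) :=
    ((hg.continuousAt).continuousWithinAt).tendsto_nhdsWithin hmaps
  exact h2.eventually h1

lemma isClosed_sublevel_on {α : Type*} [TopologicalSpace α] {K : Set α} (hK : IsClosed K)
    {f g : α → ℝ} (hf : LowerSemicontinuousOn f K) (hg : Continuous g) :
    IsClosed {x ∈ K | f x ≤ g x} := by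
  rw [← isOpen_compl_iff, isOpen_iff_mem_nhds]
  intro x hx
  simp only [mem_compl_iff, mem_setOf_eq, not_and, not_le] at hx
  by_cases hxK : x ∈ K
  · have hlt : g x < f x := hx hxK
    obtain ⟨c, hc1, hc2⟩ := exists_between hlt
    have h1 := hf x hxK c hc2
    rw [eventually_nhdsWithin_iff] at h1
    have h2 : ∀ᶠ y in nhds x, g y < c := (hg.continuousAt).eventually_lt continuous_const.continuousAt hc1
    filter_upwards [h1, h2] with y hy1 hy2
    simp only [mem_compl_iff, mem_setOf_eq, not_and, not_le]
    intro hyK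
    exact lt_trans hy2 (hy1 hyK)
  · filter_upwards [hK.isOpen_compl.mem_nhds hxK] with y hy
    simp only [mem_compl_iff, mem_setOf_eq, not_and, not_le]
    exact fun h => absurd h hy
lemma lsc_min_on_compact {α : Type*} [TopologicalSpace α] {K : Set α} (hK : IsCompact K)
    (hKcl : IsClosed K) (hKne : K.Nonempty) {f : α → ℝ} (hf : LowerSemicontinuousOn f K) :
    ∃ x ∈ K, ∀ y ∈ K, f x ≤ f y := by
  -- first, f is bounded below on K
  have hbdd : BddBelow (f '' K) := by
    by_contra hb
    have hne : ∀ j : ℕ, {x ∈ K | f x ≤ -(j : ℝ)}.Nonempty := by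
      intro j
      rw [not_bddBelow_iff] at hb
      obtain ⟨-, ⟨x, hxK, rfl⟩, hxlt⟩ := hb (-(j : ℝ))
      exact ⟨x, hxK, hxlt.le⟩
    have hcl : ∀ j : ℕ, IsClosed {x ∈ K | f x ≤ -(j : ℝ)} :=
      fun j => isClosed_sublevel_on hKcl hf continuous_const
    have hcomp : ∀ j : ℕ, IsCompact {x ∈ K | f x ≤ -(j : ℝ)} :=
      fun j => hK.of_isClosed_subset (hcl j) (fun x hx => hx.1)
    have hdec : ∀ j : ℕ, {x ∈ K | f x ≤ -((j+1 : ℕ) : ℝ)} ⊆ {x ∈ K | f x ≤ -(j : ℝ)} := by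
      intro j x hx
      refine ⟨hx.1, hx.2.trans ?_⟩
      push_cast
      linarith
    obtain ⟨x, hx⟩ := IsCompact.nonempty_iInter_of_sequence_nonempty_isCompact_isClosed
      _ hdec hne (hcomp 0) hcl
    simp only [mem_iInter, mem_setOf_eq] at hx
    obtain ⟨j, hj⟩ := exists_nat_gt (-(f x))
    have := (hx j).2
    linarith
  set m := sInf (f '' K) with hm
  have hne : ∀ j : ℕ, {x ∈ K | f x ≤ m + 1/(j+1 : ℝ)}.Nonempty := by
    intro j
    have hpos : (0:ℝ) < 1/(j+1 : ℝ) := by positivity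
    obtain ⟨-, ⟨x, hxK, rfl⟩, hxlt⟩ := exists_lt_of_csInf_lt (hKne.image f)
      (lt_add_of_pos_right m hpos)
    exact ⟨x, hxK, hxlt.le⟩
  have hcl : ∀ j : ℕ, IsClosed {x ∈ K | f x ≤ m + 1/(j+1 : ℝ)} :=
    fun j => isClosed_sublevel_on hKcl hf continuous_const
  have hcomp : ∀ j : ℕ, IsCompact {x ∈ K | f x ≤ m + 1/(j+1 : ℝ)} :=
    fun j => hK.of_isClosed_subset (hcl j) (fun x hx => hx.1)
  have hdec : ∀ j : ℕ, {x ∈ K | f x ≤ m + 1/((j+1 : ℕ)+1 : ℝ)} ⊆ {x ∈ K | f x ≤ m + 1/(j+1 : ℝ)} := by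
    intro j x hx
    refine ⟨hx.1, hx.2.trans ?_⟩
    have h1 : (0:ℝ) < (j:ℝ) + 1 := by positivity
    have h2 : ((j:ℝ)+1) ≤ ((j+1 : ℕ):ℝ)+1 := by push_cast; linarith
    have := one_div_le_one_div_of_le h1 h2
    linarith
  obtain ⟨x, hx⟩ := IsCompact.nonempty_iInter_of_sequence_nonempty_isCompact_isClosed
    _ hdec hne (hcomp 0) hcl
  simp only [mem_iInter, mem_setOf_eq] at hx
  refine ⟨x, (hx 0).1, fun y hy => ?_⟩
  have hxm : f x ≤ m := by
    by_contra hgt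
    push_neg at hgt
    obtain ⟨j, hj⟩ := exists_nat_gt (1/(f x - m))
    have hj0 : (0:ℝ) < f x - m := by linarith
    have h2 : 1/((j:ℝ)+1) < f x - m := by
      rw [div_lt_iff₀ (by positivity)]
      rw [div_lt_iff₀ hj0] at hj
      nlinarith
    have := (hx j).2
    linarith
  exact hxm.trans (csInf_le hbdd (mem_image_of_mem f hy))

/-- The conjugate of `h` over the set `S`: `h^{*S}(y) = sup_{x ∈ S} (⟨x,y⟩ − h(x))`. -/
noncomputable def conjOn {k : ℕ} (S : Set (EuclideanSpace ℝ (Fin k)))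
    (h : EuclideanSpace ℝ (Fin k) → ℝ) (y : EuclideanSpace ℝ (Fin k)) : ℝ :=
  sSup ((fun x => ⟪x, y⟫ - h x) '' S)

/-- The biconjugate of `h` (conjugate taken over `S`), with values in `ℝ ∪ {+∞}`:
`h^{**}(u) = sup_{v} (⟨u,v⟩ − h^{*S}(v))`. -/
noncomputable def biconjOn {k : ℕ} (S : Set (EuclideanSpace ℝ (Fin k)))
    (h : EuclideanSpace ℝ (Fin k) → ℝ) (u : EuclideanSpace ℝ (Fin k)) : EReal :=
  ⨆ v : EuclideanSpace ℝ (Fin k), ((⟪u, v⟫ - conjOn S h v : ℝ) : EReal)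

section aux
variable {k : ℕ} {S : Set (EuclideanSpace ℝ (Fin k))} {h : EuclideanSpace ℝ (Fin k) → ℝ}

lemma conj_cont (v : EuclideanSpace ℝ (Fin k)) (hh : Continuous h) :
    Continuous fun x : EuclideanSpace ℝ (Fin k) => ⟪x, v⟫ - h x :=
  (continuous_id.inner continuous_const).sub hh

lemma le_conj (hS : IsCompact S) (hh : Continuous h) {x : EuclideanSpace ℝ (Fin k)} (hx : x ∈ S)
    (v : EuclideanSpace ℝ (Fin k)) : ⟪x, v⟫ - h x ≤ conjOn S h v :=
  le_csSup (hS.bddAbove_image (conj_cont v hh).continuousOn) (mem_image_of_mem _ hx)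

lemma conj_le (hSne : S.Nonempty) {v : EuclideanSpace ℝ (Fin k)} {c : ℝ}
    (hc : ∀ x ∈ S, ⟪x, v⟫ - h x ≤ c) : conjOn S h v ≤ c :=
  csSup_le (hSne.image _) (by rintro - ⟨x, hx, rfl⟩; exact hc x hx)

/-- affine minorant bound on the convex hull -/
lemma hull_term_le (hS : IsCompact S) (hSne : S.Nonempty) (hh : Continuous h)
    {u : EuclideanSpace ℝ (Fin k)} (hu : u ∈ convexHull ℝ S) (v : EuclideanSpace ℝ (Fin k)) :
    ⟪u, v⟫ - conjOn S h v ≤ sSup (h '' S) := by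
  set M := sSup (h '' S) with hM
  have hMb : ∀ x ∈ S, h x ≤ M :=
    fun x hx => le_csSup (hS.bddAbove_image hh.continuousOn) (mem_image_of_mem _ hx)
  have hconv : Convex ℝ {w : EuclideanSpace ℝ (Fin k) | ⟪w, v⟫ ≤ conjOn S h v + M} := by
    intro a ha b hb p q hp hq hpq
    simp only [mem_setOf_eq] at *
    rw [inner_add_left, real_inner_smul_left, real_inner_smul_left]
    have e : p * (conjOn S h v + M) + q * (conjOn S h v + M) = conjOn S h v + M := by
      rw [← add_mul, hpq, one_mul]
    have e1 := mul_le_mul_of_nonneg_left ha hp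
    have e2 := mul_le_mul_of_nonneg_left hb hq
    linarith
  have hsub : S ⊆ {w : EuclideanSpace ℝ (Fin k) | ⟪w, v⟫ ≤ conjOn S h v + M} := by
    intro x hx
    have := le_conj hS hh hx v
    have := hMb x hx
    simp only [mem_setOf_eq]
    linarith
  have := convexHull_min hsub hconv hu
  simp only [mem_setOf_eq] at this
  linarith

lemma biconj_bdd (hS : IsCompact S) (hSne : S.Nonempty) (hh : Continuous h)
    {u : EuclideanSpace ℝ (Fin k)} (hu : u ∈ convexHull ℝ S) :
    BddAbove (range fun v : EuclideanSpace ℝ (Fin k) => ⟪u, v⟫ - conjOn S h v) :=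
  ⟨sSup (h '' S), by rintro - ⟨v, rfl⟩; exact hull_term_le hS hSne hh hu v⟩

/-- real-valued biconjugate on the hull -/
noncomputable def rbiconj (S : Set (EuclideanSpace ℝ (Fin k))) (h : EuclideanSpace ℝ (Fin k) → ℝ)
    (u : EuclideanSpace ℝ (Fin k)) : ℝ :=
  sSup (range fun v : EuclideanSpace ℝ (Fin k) => ⟪u, v⟫ - conjOn S h v)

lemma biconj_eq_coe (hS : IsCompact S) (hSne : S.Nonempty) (hh : Continuous h)
    {u : EuclideanSpace ℝ (Fin k)} (hu : u ∈ convexHull ℝ S) :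
    biconjOn S h u = ((rbiconj S h u : ℝ) : EReal) := by
  rw [biconjOn, rbiconj]
  rw [← Monotone.map_ciSup_of_continuousAt (f := fun r : ℝ => (r : EReal))
    (continuous_coe_real_ereal.continuousAt) (fun a b hab => EReal.coe_le_coe_iff.2 hab)
    (biconj_bdd hS hSne hh hu)]
  rfl

lemma rbiconj_le (hS : IsCompact S) (hSne : S.Nonempty) (hh : Continuous h)
    {u : EuclideanSpace ℝ (Fin k)} (hu : u ∈ S) : rbiconj S h u ≤ h u := by
  apply csSup_le (range_nonempty _)
  rintro - ⟨v, rfl⟩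
  dsimp only
  have := le_conj hS hh hu v
  linarith

lemma neg_conj_zero_le_rbiconj (hS : IsCompact S) (hSne : S.Nonempty) (hh : Continuous h)
    {u : EuclideanSpace ℝ (Fin k)} (hu : u ∈ convexHull ℝ S) :
    -conjOn S h 0 ≤ rbiconj S h u := by
  have := le_csSup (biconj_bdd hS hSne hh hu) (mem_range_self (f := fun v => ⟪u, v⟫ - conjOn S h v) 0)
  simp only [inner_zero_right, zero_sub] at this
  exact this

lemma coe_le_biconj (u v : EuclideanSpace ℝ (Fin k)) :
    ((⟪u, v⟫ - conjOn S h v : ℝ) : EReal) ≤ biconjOn S h u :=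
  le_iSup (fun v : EuclideanSpace ℝ (Fin k) => ((⟪u, v⟫ - conjOn S h v : ℝ) : EReal)) v

lemma rbiconj_convex (hS : IsCompact S) (hSne : S.Nonempty) (hh : Continuous h)
    {u₁ u₂ : EuclideanSpace ℝ (Fin k)} (h₁ : u₁ ∈ convexHull ℝ S) (h₂ : u₂ ∈ convexHull ℝ S)
    {a b : ℝ} (ha : 0 ≤ a) (hb : 0 ≤ b) (hab : a + b = 1) :
    rbiconj S h (a • u₁ + b • u₂) ≤ a * rbiconj S h u₁ + b * rbiconj S h u₂ := by
  apply csSup_le (range_nonempty _)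
  rintro - ⟨v, rfl⟩
  dsimp only
  have e1 : ⟪a • u₁ + b • u₂, v⟫ - conjOn S h v
      = a * (⟪u₁, v⟫ - conjOn S h v) + b * (⟪u₂, v⟫ - conjOn S h v) := by
    rw [inner_add_left, real_inner_smul_left, real_inner_smul_left]
    linear_combination (conjOn S h v) * hab
  rw [e1]
  have t1 : ⟪u₁, v⟫ - conjOn S h v ≤ rbiconj S h u₁ :=
    le_csSup (biconj_bdd hS hSne hh h₁) (mem_range_self v)
  have t2 : ⟪u₂, v⟫ - conjOn S h v ≤ rbiconj S h u₂ :=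
    le_csSup (biconj_bdd hS hSne hh h₂) (mem_range_self v)
  have e1 := mul_le_mul_of_nonneg_left t1 ha
  have e2 := mul_le_mul_of_nonneg_left t2 hb
  linarith

lemma rbiconj_lsc (hS : IsCompact S) (hSne : S.Nonempty) (hh : Continuous h) :
    LowerSemicontinuousOn (rbiconj S h) (convexHull ℝ S) := by
  intro u hu c hc
  obtain ⟨-, ⟨v, rfl⟩, hv⟩ := exists_lt_of_lt_csSup (range_nonempty _) hc
  have hopen : IsOpen {w : EuclideanSpace ℝ (Fin k) | c < ⟪w, v⟫ - conjOn S h v} :=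
    isOpen_lt continuous_const ((continuous_id.inner continuous_const).sub continuous_const)
  have hmem : u ∈ {w : EuclideanSpace ℝ (Fin k) | c < ⟪w, v⟫ - conjOn S h v} := hv
  filter_upwards [mem_nhdsWithin_of_mem_nhds (hopen.mem_nhds hmem),
    self_mem_nhdsWithin] with w hw hwS
  exact lt_of_lt_of_le hw (le_csSup (biconj_bdd hS hSne hh hwS) (mem_range_self v))

lemma rbiconj_le_sSup (hS : IsCompact S) (hSne : S.Nonempty) (hh : Continuous h)
    {u : EuclideanSpace ℝ (Fin k)} (hu : u ∈ convexHull ℝ S) :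
    rbiconj S h u ≤ sSup (h '' S) :=
  csSup_le (range_nonempty _) (by rintro - ⟨v, rfl⟩; exact hull_term_le hS hSne hh hu v)

lemma biconj_top (hS : IsCompact S) (hSne : S.Nonempty) (hh : Continuous h)
    {u : EuclideanSpace ℝ (Fin k)} (hu : u ∉ convexHull ℝ S) :
    biconjOn S h u = ⊤ := by
  have hco : IsCompact (convexHull ℝ S) := isCompact_convexHull_fd hS
  obtain ⟨f, β, hfb, hfu⟩ := geometric_hahn_banach_closed_point
    (convex_convexHull ℝ S) hco.isClosed hu
  set y₀ := (InnerProductSpace.toDual ℝ (EuclideanSpace ℝ (Fin k))).symm f with hy₀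
  have hrep : ∀ w, ⟪y₀, w⟫ = f w := fun w => InnerProductSpace.toDual_symm_apply
  set M₂ := sSup ((fun x => -h x) '' S) with hM₂
  have hM₂b : ∀ x ∈ S, -h x ≤ M₂ := fun x hx =>
    le_csSup (hS.bddAbove_image (continuous_neg.comp hh).continuousOn) (mem_image_of_mem _ hx)
  have hgap : 0 < f u - β := by
    have := hfu
    linarith
  rw [biconjOn, iSup_eq_top]
  intro b hb
  induction b with
  | bot => exact ⟨0, bot_lt_iff_ne_bot.2 (EReal.coe_ne_bot _)⟩
  | coe r =>
    set t : ℝ := max 0 ((r + M₂ + 1) / (f u - β)) with ht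
    have ht0 : 0 ≤ t := le_max_left _ _
    refine ⟨t • y₀, ?_⟩
    have hconj : conjOn S h (t • y₀) ≤ t * β + M₂ := by
      apply conj_le hSne
      intro x hx
      have h1 : ⟪x, t • y₀⟫ = t * ⟪y₀, x⟫ := by
        rw [real_inner_smul_right, real_inner_comm]
      have h2 : ⟪y₀, x⟫ = f x := hrep x
      have h3 : f x < β := hfb x (subset_convexHull ℝ S hx)
      have h4 : -h x ≤ M₂ := hM₂b x hx
      rw [h1, h2]
      nlinarith
    have hterm : r < ⟪u, t • y₀⟫ - conjOn S h (t • y₀) := by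
      have h1 : ⟪u, t • y₀⟫ = t * f u := by
        rw [real_inner_smul_right, real_inner_comm, hrep]
      have h5 : (r + M₂ + 1) / (f u - β) ≤ t := le_max_right _ _
      have h6 : r + M₂ + 1 ≤ t * (f u - β) := by
        rw [div_le_iff₀ hgap] at h5
        linarith
      rw [h1]
      nlinarith
    exact_mod_cast EReal.coe_lt_coe_iff.2 hterm
  | top => exact absurd hb (lt_irrefl _)
end aux

/-- Proposition 3.2: the conjugate DP operator equals the DP operator with the input cost
and the expected value function replaced by their biconjugates; both sides are finite and
the infimum over the convex hull of `𝕌` is attained. -/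
theorem cdp_biconjugate_reformulation {n m : ℕ}
    (X : Set (EuclideanSpace ℝ (Fin n))) (hXne : X.Nonempty) (hXc : IsCompact X)
    (U : Set (EuclideanSpace ℝ (Fin m))) (hUne : U.Nonempty) (hUc : IsCompact U)
    (Ci : EuclideanSpace ℝ (Fin m) → ℝ) (KCi : NNReal) (hCi : LipschitzWith KCi Ci)
    (J : EuclideanSpace ℝ (Fin n) → ℝ) (KJ : NNReal) (hJ : LipschitzWith KJ J)
    (B : EuclideanSpace ℝ (Fin m) →L[ℝ] EuclideanSpace ℝ (Fin n))
    (fs : EuclideanSpace ℝ (Fin n) → EuclideanSpace ℝ (Fin n))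
    (W : Finset (EuclideanSpace ℝ (Fin n))) (hWne : W.Nonempty)
    (p : EuclideanSpace ℝ (Fin n) → ℝ)
    (hp : ∀ w ∈ W, 0 ≤ p w) (hpsum : ∑ w ∈ W, p w = 1)
    (γ : ℝ) (hγ : 0 < γ)
    (ε : EuclideanSpace ℝ (Fin n) → ℝ)
    (hε : ∀ z, ε z = γ * ∑ w ∈ W, p w * J (z + w))
    (D : Set (EuclideanSpace ℝ (Fin n)))
    (hD : D = {z | ∀ w ∈ W, z + w ∈ X}) (hDne : D.Nonempty)
    (x : EuclideanSpace ℝ (Fin n))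
    (hfeas : ∃ u ∈ U, fs x + B u ∈ D) :
    (⨆ y : EuclideanSpace ℝ (Fin n),
        ((⟪y, fs x⟫ - conjOn U Ci (-(ContinuousLinearMap.adjoint B) y) - conjOn D ε y : ℝ) :
          EReal)) =
      (⨅ u ∈ convexHull ℝ U, (biconjOn U Ci u + biconjOn D ε (fs x + B u))) ∧
    (∃ r : ℝ,
      (⨆ y : EuclideanSpace ℝ (Fin n),
        ((⟪y, fs x⟫ - conjOn U Ci (-(ContinuousLinearMap.adjoint B) y) - conjOn D ε y : ℝ) :
          EReal)) = (r : EReal)) ∧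
    ∃ u₀ ∈ convexHull ℝ U,
      biconjOn U Ci u₀ + biconjOn D ε (fs x + B u₀) =
        ⨅ u ∈ convexHull ℝ U, (biconjOn U Ci u + biconjOn D ε (fs x + B u)) := by
  classical
  have hCic : Continuous Ci := hCi.continuous
  have hεc : Continuous ε := by
    have hfun : ε = fun z => γ * ∑ w ∈ W, p w * J (z + w) := funext hε
    rw [hfun]
    exact continuous_const.mul (continuous_finset_sum _ fun w _ =>
      continuous_const.mul (hJ.continuous.comp (continuous_id.add continuous_const)))
  -- D is compact
  have hDcl : IsClosed D := by
    rw [hD]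
    have : {z : EuclideanSpace ℝ (Fin n) | ∀ w ∈ W, z + w ∈ X}
        = ⋂ w ∈ W, (fun z => z + w) ⁻¹' X := by
      ext z; simp [mem_iInter]
    rw [this]
    exact isClosed_biInter fun w _ =>
      IsClosed.preimage (continuous_id.add continuous_const) hXc.isClosed
  obtain ⟨w₀, hw₀⟩ := hWne
  have hDc : IsCompact D := by
    have himg : IsCompact ((fun v => v - w₀) '' X) :=
      hXc.image (continuous_id.sub continuous_const)
    refine IsCompact.of_isClosed_subset himg hDcl ?_
    intro z hz
    rw [hD] at hz
    exact ⟨z + w₀, hz w₀ hw₀, by dsimp only; abel⟩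
  have hcoUc : IsCompact (convexHull ℝ U) := isCompact_convexHull_fd hUc
  have hcoDc : IsCompact (convexHull ℝ D) := isCompact_convexHull_fd hDc
  obtain ⟨uf, hufU, hufD⟩ := hfeas
  have hufco : uf ∈ convexHull ℝ U := subset_convexHull ℝ U hufU
  have hzfco : fs x + B uf ∈ convexHull ℝ D := subset_convexHull ℝ D hufD
  -- weak duality
  have hweak : (⨆ y : EuclideanSpace ℝ (Fin n),
      ((⟪y, fs x⟫ - conjOn U Ci (-(ContinuousLinearMap.adjoint B) y) - conjOn D ε y : ℝ) :
        EReal)) ≤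
      ⨅ u ∈ convexHull ℝ U, (biconjOn U Ci u + biconjOn D ε (fs x + B u)) := by
    apply iSup_le
    intro y
    apply le_iInf₂
    intro u hu
    have h1 : ((⟪u, -(ContinuousLinearMap.adjoint B) y⟫
        - conjOn U Ci (-(ContinuousLinearMap.adjoint B) y) : ℝ) : EReal) ≤ biconjOn U Ci u :=
      coe_le_biconj u (-(ContinuousLinearMap.adjoint B) y)
    have h2 : ((⟪fs x + B u, y⟫ - conjOn D ε y : ℝ) : EReal) ≤ biconjOn D ε (fs x + B u) :=
      coe_le_biconj (fs x + B u) y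
    have hre : ⟪y, fs x⟫ - conjOn U Ci (-(ContinuousLinearMap.adjoint B) y) - conjOn D ε y
        = (⟪u, -(ContinuousLinearMap.adjoint B) y⟫
            - conjOn U Ci (-(ContinuousLinearMap.adjoint B) y))
          + (⟪fs x + B u, y⟫ - conjOn D ε y) := by
      have e1 : ⟪u, -(ContinuousLinearMap.adjoint B) y⟫ = -⟪B u, y⟫ := by
        rw [inner_neg_right, ContinuousLinearMap.adjoint_inner_right]
      have e2 : ⟪fs x + B u, y⟫ = ⟪fs x, y⟫ + ⟪B u, y⟫ := inner_add_left _ _ _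
      have e3 : ⟪y, fs x⟫ = ⟪fs x, y⟫ := real_inner_comm _ _
      rw [e1, e2, e3]; ring
    rw [hre, EReal.coe_add]
    exact add_le_add h1 h2
  -- the core claim for strong duality
  have hclaim : ∀ c : ℝ,
      (c : EReal) < ⨅ u ∈ convexHull ℝ U, (biconjOn U Ci u + biconjOn D ε (fs x + B u)) →
      (c : EReal) ≤ ⨆ y : EuclideanSpace ℝ (Fin n),
        ((⟪y, fs x⟫ - conjOn U Ci (-(ContinuousLinearMap.adjoint B) y) - conjOn D ε y : ℝ) :
          EReal) := by
    intro c hc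
    set mU := sSup (Ci '' U) with hmU
    set mD := sSup (ε '' D) with hmD
    set lb := (-conjOn U Ci 0) + (-conjOn D ε 0) with hlb0
    have hc1ub : ∀ u ∈ convexHull ℝ U, rbiconj U Ci u ≤ mU :=
      fun u hu => rbiconj_le_sSup hUc hUne hCic hu
    have hc2ub : ∀ z ∈ convexHull ℝ D, rbiconj D ε z ≤ mD :=
      fun z hz => rbiconj_le_sSup hDc hDne hεc hz
    have hc1lb : ∀ u ∈ convexHull ℝ U, -conjOn U Ci 0 ≤ rbiconj U Ci u :=
      fun u hu => neg_conj_zero_le_rbiconj hUc hUne hCic hu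
    have hc2lb : ∀ z ∈ convexHull ℝ D, -conjOn D ε 0 ≤ rbiconj D ε z :=
      fun z hz => neg_conj_zero_le_rbiconj hDc hDne hεc hz
    set A : Set (EuclideanSpace ℝ (Fin n) × ℝ) :=
      (fun q : EuclideanSpace ℝ (Fin m) × EuclideanSpace ℝ (Fin n) × ℝ =>
        (q.2.1 - fs x - B q.1, q.2.2)) ''
        {q ∈ (convexHull ℝ U) ×ˢ ((convexHull ℝ D) ×ˢ (Icc lb (mU + mD))) |
          rbiconj U Ci q.1 + rbiconj D ε q.2.1 ≤ q.2.2} with hA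
    set ray : Set (EuclideanSpace ℝ (Fin n) × ℝ) := {(0 : EuclideanSpace ℝ (Fin n))} ×ˢ (Ici (0:ℝ))
      with hray
    set Eset := A + ray with hEset
    have hmemE : ∀ q : EuclideanSpace ℝ (Fin n) × ℝ, q ∈ Eset ↔
        ∃ u ∈ convexHull ℝ U, ∃ z ∈ convexHull ℝ D,
          q.1 = z - fs x - B u ∧ rbiconj U Ci u + rbiconj D ε z ≤ q.2 := by
      intro q
      rw [hEset, Set.mem_add]
      constructor
      · rintro ⟨a, ⟨⟨u, z, t⟩, ⟨⟨huU, hzD, htIcc⟩, hle⟩, rfl⟩, r, hr, rfl⟩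
        rw [hray] at hr
        obtain ⟨hr1, hr2⟩ := hr
        simp only [mem_singleton_iff] at hr1
        rw [mem_Ici] at hr2
        refine ⟨u, huU, z, hzD, ?_, ?_⟩
        · simp only [Prod.fst_add, hr1, add_zero]
        · simp only at hle
          have : ((fun q : EuclideanSpace ℝ (Fin m) × EuclideanSpace ℝ (Fin n) × ℝ =>
              (q.2.1 - fs x - B q.1, q.2.2)) (u, z, t) + r).2 = t + r.2 := rfl
          rw [this]
          linarith
      · rintro ⟨u, huU, z, hzD, hq1, hq2⟩
        have hsum_le : rbiconj U Ci u + rbiconj D ε z ≤ mU + mD :=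
          add_le_add (hc1ub u huU) (hc2ub z hzD)
        have hsum_ge : lb ≤ rbiconj U Ci u + rbiconj D ε z :=
          add_le_add (hc1lb u huU) (hc2lb z hzD)
        refine ⟨(z - fs x - B u, min q.2 (mU + mD)),
          ⟨(u, z, min q.2 (mU + mD)), ⟨⟨huU, hzD, ?_, ?_⟩, ?_⟩, rfl⟩,
          (0, q.2 - min q.2 (mU + mD)), ⟨rfl, ?_⟩, ?_⟩
        · exact le_min (hsum_ge.trans hq2) (hsum_ge.trans hsum_le)
        · exact min_le_right _ _
        · exact le_min hq2 hsum_le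
        · rw [mem_Ici, sub_nonneg]; exact min_le_left _ _
        · ext
          · simp [hq1]
          · simp
    have hEconv : Convex ℝ Eset := by
      intro q hq r hr a b ha hb hab
      rw [hmemE] at hq hr
      rw [hmemE]
      obtain ⟨u₁, hu₁, z₁, hz₁, hq1, hq2⟩ := hq
      obtain ⟨u₂, hu₂, z₂, hz₂, hr1, hr2⟩ := hr
      refine ⟨a • u₁ + b • u₂, (convex_convexHull ℝ U) hu₁ hu₂ ha hb hab,
        a • z₁ + b • z₂, (convex_convexHull ℝ D) hz₁ hz₂ ha hb hab, ?_, ?_⟩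
      · have e1 : (a • q + b • r).1 = a • q.1 + b • r.1 := rfl
        rw [e1, hq1, hr1]
        have eB : B (a • u₁ + b • u₂) = a • B u₁ + b • B u₂ := by
          rw [map_add, map_smul, map_smul]
        rw [eB]
        have efs : fs x = a • fs x + b • fs x := by rw [← add_smul, hab, one_smul]
        conv_rhs => rw [show fs x = a • fs x + b • fs x from efs]
        rw [smul_sub, smul_sub, smul_sub, smul_sub]
        abel
      · have e2 : (a • q + b • r).2 = a * q.2 + b * r.2 := rfl
        rw [e2]
        have hcvx1 := rbiconj_convex hUc hUne hCic hu₁ hu₂ ha hb hab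
        have hcvx2 := rbiconj_convex hDc hDne hεc hz₁ hz₂ ha hb hab
        have e3 := mul_le_mul_of_nonneg_left hq2 ha
        have e4 := mul_le_mul_of_nonneg_left hr2 hb
        linarith
    have hKc : IsCompact ((convexHull ℝ U) ×ˢ ((convexHull ℝ D) ×ˢ (Icc lb (mU + mD)))) :=
      hcoUc.prod (hcoDc.prod isCompact_Icc)
    have hlscK : LowerSemicontinuousOn
        (fun q : EuclideanSpace ℝ (Fin m) × EuclideanSpace ℝ (Fin n) × ℝ =>
          rbiconj U Ci q.1 + rbiconj D ε q.2.1)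
        ((convexHull ℝ U) ×ˢ ((convexHull ℝ D) ×ˢ (Icc lb (mU + mD)))) := by
      apply LowerSemicontinuousOn.add
      · exact lscOn_comp_cont (rbiconj_lsc hUc hUne hCic) continuous_fst (fun q hq => hq.1)
      · exact lscOn_comp_cont (rbiconj_lsc hDc hDne hεc)
          (continuous_fst.comp continuous_snd) (fun q hq => hq.2.1)
    have hS'cl : IsClosed {q ∈ (convexHull ℝ U) ×ˢ ((convexHull ℝ D) ×ˢ (Icc lb (mU + mD))) |
        rbiconj U Ci q.1 + rbiconj D ε q.2.1 ≤ q.2.2} :=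
      isClosed_sublevel_on hKc.isClosed hlscK (continuous_snd.comp continuous_snd)
    have hS'c : IsCompact {q ∈ (convexHull ℝ U) ×ˢ ((convexHull ℝ D) ×ˢ (Icc lb (mU + mD))) |
        rbiconj U Ci q.1 + rbiconj D ε q.2.1 ≤ q.2.2} :=
      hKc.of_isClosed_subset hS'cl (fun q hq => hq.1)
    have hAc : IsCompact A := by
      rw [hA]
      apply hS'c.image
      exact (((continuous_fst.comp continuous_snd).sub continuous_const).sub
        (B.continuous.comp continuous_fst)).prodMk (continuous_snd.comp continuous_snd)
    have hraycl : IsClosed ray := isClosed_singleton.prod isClosed_Ici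
    have hEcl : IsClosed Eset := hraycl.add_left_of_isCompact hAc
    have h0c : ((0 : EuclideanSpace ℝ (Fin n)), c) ∉ Eset := by
      intro hmem
      rw [hmemE] at hmem
      obtain ⟨u, hu, z, hz, h1, h2⟩ := hmem
      have h3 : z - (fs x + B u) = 0 := by
        have h4 : (0 : EuclideanSpace ℝ (Fin n)) = z - fs x - B u := h1
        rw [sub_add_eq_sub_sub, ← h4]
      have hz' : z = fs x + B u := sub_eq_zero.1 h3
      have hzmem : fs x + B u ∈ convexHull ℝ D := hz' ▸ hz
      have hle := iInf₂_le (f := fun u (_ : u ∈ convexHull ℝ U) =>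
        biconjOn U Ci u + biconjOn D ε (fs x + B u)) u hu
      rw [biconj_eq_coe hUc hUne hCic hu, biconj_eq_coe hDc hDne hεc hzmem,
        ← EReal.coe_add] at hle
      have h2' : rbiconj U Ci u + rbiconj D ε (fs x + B u) ≤ c := by
        rw [← hz']; exact h2
      have hfin2 := hle.trans (EReal.coe_le_coe_iff.2 h2')
      exact absurd (lt_of_lt_of_le hc hfin2) (lt_irrefl _)
    obtain ⟨f, β, hfc0, hfE⟩ := geometric_hahn_banach_point_closed hEconv hEcl h0c
    set s := f ((0 : EuclideanSpace ℝ (Fin n)), (1 : ℝ)) with hs_def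
    have hsplit : ∀ q : EuclideanSpace ℝ (Fin n) × ℝ, f q = f (q.1, 0) + q.2 * s := by
      intro q
      have hq : q = (q.1, (0:ℝ)) + q.2 • ((0 : EuclideanSpace ℝ (Fin n)), (1:ℝ)) := by
        ext
        · simp
        · simp
      rw [show f q = f ((q.1, (0:ℝ)) + q.2 • ((0 : EuclideanSpace ℝ (Fin n)), (1:ℝ))) from by
        rw [← hq], map_add, map_smul, smul_eq_mul]
    set y₀ : EuclideanSpace ℝ (Fin n) :=
      (InnerProductSpace.toDual ℝ (EuclideanSpace ℝ (Fin n))).symm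
        (f.comp (ContinuousLinearMap.inl ℝ (EuclideanSpace ℝ (Fin n)) ℝ)) with hy₀
    have hrep : ∀ w : EuclideanSpace ℝ (Fin n), ⟪y₀, w⟫ = f (w, 0) := by
      intro w
      rw [hy₀, InnerProductSpace.toDual_symm_apply]
      rfl
    have h00 : f ((0 : EuclideanSpace ℝ (Fin n)), (0:ℝ)) = 0 := by
      rw [show ((0 : EuclideanSpace ℝ (Fin n)), (0:ℝ)) = (0 : EuclideanSpace ℝ (Fin n) × ℝ)
        from rfl, map_zero]
    have hfc' : c * s < β := by
      have := hfc0
      rw [hsplit ((0 : EuclideanSpace ℝ (Fin n)), c)] at this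
      simpa [h00] using this
    have key : ∀ u ∈ convexHull ℝ U, ∀ z ∈ convexHull ℝ D, ∀ t : ℝ,
        rbiconj U Ci u + rbiconj D ε z ≤ t →
        β < ⟪y₀, z - fs x - B u⟫ + t * s := by
      intro u hu z hz t ht
      have hqE : ((z - fs x - B u, t) : EuclideanSpace ℝ (Fin n) × ℝ) ∈ Eset :=
        (hmemE _).2 ⟨u, hu, z, hz, rfl, ht⟩
      have hb := hfE _ hqE
      rw [hsplit] at hb
      rw [hrep]
      exact hb
    have hzero : fs x + B uf - fs x - B uf = 0 := by abel
    have hs_pos : 0 < s := by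
      rcases lt_trichotomy s 0 with hneg | hzs | hpos
      · exfalso
        set t := max (rbiconj U Ci uf + rbiconj D ε (fs x + B uf)) (β/s + 1) with htd
        have hk := key uf hufco (fs x + B uf) hzfco t (le_max_left _ _)
        rw [hzero, inner_zero_right, zero_add] at hk
        have h5 : β/s + 1 ≤ t := le_max_right _ _
        have h6 : t * s ≤ (β/s + 1) * s := mul_le_mul_of_nonpos_right h5 hneg.le
        have h7 : (β/s + 1) * s = β + s := by
          rw [add_mul, one_mul, div_mul_cancel₀ β (ne_of_lt hneg)]
        linarith
      · exfalso
        have hk := key uf hufco (fs x + B uf) hzfco _ le_rfl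
        rw [hzero, inner_zero_right, zero_add, hzs, mul_zero] at hk
        rw [hzs, mul_zero] at hfc'
        linarith
      · exact hpos
    set y : EuclideanSpace ℝ (Fin n) := (-s⁻¹) • y₀ with hy
    have hyw : ∀ w : EuclideanSpace ℝ (Fin n), ⟪y₀, w⟫ = -s * ⟪y, w⟫ := by
      intro w
      rw [hy, real_inner_smul_left]
      field_simp
    have hkey2 : ∀ u ∈ U, ∀ z ∈ D,
        (⟪u, -(ContinuousLinearMap.adjoint B) y⟫ - Ci u) + (⟪z, y⟫ - ε z)
          ≤ ⟪y, fs x⟫ - β/s := by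
      intro u hu z hz
      have hble : rbiconj U Ci u + rbiconj D ε z ≤ Ci u + ε z :=
        add_le_add (rbiconj_le hUc hUne hCic hu) (rbiconj_le hDc hDne hεc hz)
      have hk := key u (subset_convexHull ℝ U hu) z (subset_convexHull ℝ D hz) _ hble
      have e0 : ⟪y₀, z - fs x - B u⟫ = ⟪y₀, z⟫ - ⟪y₀, fs x⟫ - ⟪y₀, B u⟫ := by
        rw [inner_sub_right, inner_sub_right]
      rw [e0, hyw z, hyw (fs x), hyw (B u)] at hk
      have eadj : ⟪u, -(ContinuousLinearMap.adjoint B) y⟫ = -⟪y, B u⟫ := by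
        rw [inner_neg_right, ContinuousLinearMap.adjoint_inner_right, real_inner_comm]
      have ezy : ⟪z, y⟫ = ⟪y, z⟫ := real_inner_comm _ _
      rw [eadj, ezy]
      have hβ : β / s * s = β := div_mul_cancel₀ β (ne_of_gt hs_pos)
      nlinarith [hk, hβ, hs_pos]
    have step1 : ∀ z ∈ D, conjOn U Ci (-(ContinuousLinearMap.adjoint B) y)
        ≤ ⟪y, fs x⟫ - β/s - (⟪z, y⟫ - ε z) := by
      intro z hz
      apply conj_le hUne
      intro u hu
      have := hkey2 u hu z hz
      linarith
    have step2 : conjOn D ε y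
        ≤ ⟪y, fs x⟫ - β/s - conjOn U Ci (-(ContinuousLinearMap.adjoint B) y) := by
      apply conj_le hDne
      intro z hz
      have := step1 z hz
      linarith
    have hcβ : c < β / s := by
      rw [lt_div_iff₀ hs_pos]
      exact hfc'
    have hfinal : c ≤ ⟪y, fs x⟫ - conjOn U Ci (-(ContinuousLinearMap.adjoint B) y)
        - conjOn D ε y := by linarith
    calc (c : EReal)
        ≤ ((⟪y, fs x⟫ - conjOn U Ci (-(ContinuousLinearMap.adjoint B) y)
            - conjOn D ε y : ℝ) : EReal) := EReal.coe_le_coe_iff.2 hfinal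
      _ ≤ ⨆ y' : EuclideanSpace ℝ (Fin n),
            ((⟪y', fs x⟫ - conjOn U Ci (-(ContinuousLinearMap.adjoint B) y')
              - conjOn D ε y' : ℝ) : EReal) :=
          le_iSup (fun y' : EuclideanSpace ℝ (Fin n) =>
            ((⟪y', fs x⟫ - conjOn U Ci (-(ContinuousLinearMap.adjoint B) y')
              - conjOn D ε y' : ℝ) : EReal)) y
  -- strong duality
  have hstrong : (⨅ u ∈ convexHull ℝ U, (biconjOn U Ci u + biconjOn D ε (fs x + B u))) ≤
      ⨆ y : EuclideanSpace ℝ (Fin n),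
        ((⟪y, fs x⟫ - conjOn U Ci (-(ContinuousLinearMap.adjoint B) y) - conjOn D ε y : ℝ) :
          EReal) := by
    by_contra hlt
    push_neg at hlt
    obtain ⟨c, hc1, hc2⟩ := EReal.exists_between_coe_real hlt
    exact absurd (lt_of_le_of_lt (hclaim c hc2) hc1) (lt_irrefl _)
  have heq := le_antisymm hweak hstrong
  -- finiteness
  have hub : (⨅ u ∈ convexHull ℝ U, (biconjOn U Ci u + biconjOn D ε (fs x + B u)))
      ≤ ((rbiconj U Ci uf + rbiconj D ε (fs x + B uf) : ℝ) : EReal) := by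
    have := iInf₂_le (f := fun u (_ : u ∈ convexHull ℝ U) =>
      biconjOn U Ci u + biconjOn D ε (fs x + B u)) uf hufco
    rwa [biconj_eq_coe hUc hUne hCic hufco, biconj_eq_coe hDc hDne hεc hzfco,
      ← EReal.coe_add] at this
  have hlb : ((-conjOn U Ci 0 + -conjOn D ε 0 : ℝ) : EReal)
      ≤ ⨅ u ∈ convexHull ℝ U, (biconjOn U Ci u + biconjOn D ε (fs x + B u)) := by
    apply le_iInf₂
    intro u hu
    have h1 : ((⟪u, (0 : EuclideanSpace ℝ (Fin m))⟫ - conjOn U Ci 0 : ℝ) : EReal)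
        ≤ biconjOn U Ci u := coe_le_biconj u 0
    have h2 : ((⟪fs x + B u, (0 : EuclideanSpace ℝ (Fin n))⟫ - conjOn D ε 0 : ℝ) : EReal)
        ≤ biconjOn D ε (fs x + B u) := coe_le_biconj (fs x + B u) 0
    rw [inner_zero_right] at h1 h2
    rw [EReal.coe_add]
    exact add_le_add (by simpa using h1) (by simpa using h2)
  have hfin : ∃ r : ℝ,
      (⨅ u ∈ convexHull ℝ U, (biconjOn U Ci u + biconjOn D ε (fs x + B u))) = (r : EReal) := by
    set R := ⨅ u ∈ convexHull ℝ U, (biconjOn U Ci u + biconjOn D ε (fs x + B u)) with hR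
    have h1 : R ≠ ⊤ := ne_top_of_le_ne_top (EReal.coe_ne_top _) hub
    have h2 : R ≠ ⊥ := by
      intro hbot
      rw [hbot] at hlb
      exact absurd (le_bot_iff.1 hlb) (EReal.coe_ne_bot _)
    exact ⟨R.toReal, (EReal.coe_toReal h1 h2).symm⟩
  -- attainment
  have hatt : ∃ u₀ ∈ convexHull ℝ U,
      biconjOn U Ci u₀ + biconjOn D ε (fs x + B u₀) =
        ⨅ u ∈ convexHull ℝ U, (biconjOn U Ci u + biconjOn D ε (fs x + B u)) := by
    set K' := (convexHull ℝ U) ∩ ((fun u => fs x + B u) ⁻¹' (convexHull ℝ D)) with hK'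
    have hK'c : IsCompact K' :=
      hcoUc.inter_right (IsClosed.preimage (continuous_const.add B.continuous) hcoDc.isClosed)
    have hK'ne : K'.Nonempty := ⟨uf, hufco, hzfco⟩
    have hlsc : LowerSemicontinuousOn
        (fun u => rbiconj U Ci u + rbiconj D ε (fs x + B u)) K' := by
      apply LowerSemicontinuousOn.add
      · exact (rbiconj_lsc hUc hUne hCic).mono inter_subset_left
      · exact lscOn_comp_cont (rbiconj_lsc hDc hDne hεc)
          (continuous_const.add B.continuous) (fun u hu => hu.2)
    obtain ⟨u₀, hu₀K, hmin⟩ := lsc_min_on_compact hK'c hK'c.isClosed hK'ne hlsc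
    refine ⟨u₀, hu₀K.1, le_antisymm ?_ (iInf₂_le u₀ hu₀K.1)⟩
    apply le_iInf₂
    intro u hu
    by_cases hmem : fs x + B u ∈ convexHull ℝ D
    · have huK : u ∈ K' := ⟨hu, hmem⟩
      rw [biconj_eq_coe hUc hUne hCic hu₀K.1, biconj_eq_coe hDc hDne hεc hu₀K.2,
        biconj_eq_coe hUc hUne hCic hu, biconj_eq_coe hDc hDne hεc hmem,
        ← EReal.coe_add, ← EReal.coe_add]
      exact EReal.coe_le_coe_iff.2 (hmin u huK)
    · rw [biconj_top hDc hDne hεc hmem, EReal.add_top_of_ne_bot]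
      · exact le_top
      · intro hbot
        have := coe_le_biconj (S := U) (h := Ci) u 0
        rw [hbot] at this
        exact absurd (le_bot_iff.1 this) (EReal.coe_ne_bot _)
  refine ⟨heq, ?_, hatt⟩
  obtain ⟨r, hr⟩ := hfin
  exact ⟨r, by rw [heq, hr]⟩
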